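/- Let X and Y be integrable real random variables with cumulative distribution functions F_X and F_Y satisfying F_X(t) ≤ F_Y(t) for all t ∈ ℝ (X first-order stochastically dominates Y). Let η ∈ ℝ be such that ∫_{-∞}^η F_X(r) dr > 0 and ∫_{-∞}^η F_Y(r) dr > 0. Then Ω_X(η) ≥ Ω_Y(η), where Ω_Z(η) = (∫_η^∞ (1 − F_Z(r)) dr) / (∫_{-∞}^η F_Z(r) dr). That is, first-order stochastic dominance implies Omega-ratio dominance at every threshold. -/

import Mathlib

open MeasureTheory

/-- Auxiliary: the tail probability function `r ↦ P(X > r)` is integrable on `(η, ∞)`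
when `X` is integrable. -/
lemma tail_integrableOn_aux {Ω : Type*} [MeasurableSpace Ω] (P : Measure Ω)
    [IsProbabilityMeasure P] (X : Ω → ℝ) (hX : Measurable X) (hXi : Integrable X P) (η : ℝ) :
    IntegrableOn (fun r => (P {ω | r < X ω}).toReal) (Set.Ioi η) volume := by
  have hanti : Antitone (fun r : ℝ => P {ω | r < X ω}) := by
    intro r s hrs
    exact measure_mono (fun ω h => lt_of_le_of_lt hrs h)
  apply integrable_toReal_of_lintegral_ne_top (hanti.measurable.aemeasurable)
  -- change of variables t ↦ t + η
  have hmp : MeasurePreserving (fun t : ℝ => t + η) volume volume :=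
    measurePreserving_add_right volume η
  have hemb : MeasurableEmbedding (fun t : ℝ => t + η) :=
    (Homeomorph.addRight η).measurableEmbedding
  have himg : (fun t : ℝ => t + η) '' Set.Ioi 0 = Set.Ioi η := by
    ext x
    simp only [Set.mem_image, Set.mem_Ioi]
    constructor
    · rintro ⟨t, ht, rfl⟩; linarith
    · intro hx; exact ⟨x - η, by linarith, by ring⟩
  have key : ∫⁻ r in Set.Ioi η, P {ω | r < X ω}
      = ∫⁻ t in Set.Ioi 0, P {ω | t + η < X ω} := by
    rw [← himg, ← hmp.setLIntegral_comp_emb hemb (fun r => P {ω | r < X ω}) (Set.Ioi 0)]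
  have hmax : Integrable (fun ω => max (X ω - η) 0) P :=
    (hXi.sub (integrable_const η)).pos_part
  have key2 : ∫⁻ t in Set.Ioi 0, P {ω | t + η < X ω}
      = ∫⁻ t in Set.Ioi 0, P {ω | t < max (X ω - η) 0} := by
    apply setLIntegral_congr_fun measurableSet_Ioi ?_
    intro t ht
    dsimp only
    congr 1
    ext ω
    simp only [Set.mem_setOf_eq, lt_max_iff]
    constructor
    · intro h; left; linarith
    · rintro (h | h)
      · linarith
      · exact absurd h (not_lt.mpr (le_of_lt ht))
  have key3 : ∫⁻ t in Set.Ioi 0, P {ω | t < max (X ω - η) 0}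
      = ∫⁻ ω, ENNReal.ofReal (max (X ω - η) 0) ∂P :=
    (lintegral_eq_lintegral_meas_lt P
      (Filter.Eventually.of_forall fun ω => le_max_right _ _) hmax.aemeasurable).symm
  rw [key, key2, key3]
  exact hmax.lintegral_lt_top.ne

/-- If `X` first-order stochastically dominates `Y`
(`F_X t ≤ F_Y t` for all `t`) and the loss integrals at threshold `η` are positive,
then the Omega ratios satisfy `Ω_X(η) ≥ Ω_Y(η)`. -/
theorem omega_ratio_dominance_of_fsd
    {Ω : Type*} [MeasurableSpace Ω] (P : Measure Ω) [IsProbabilityMeasure P]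
    (X Y : Ω → ℝ) (hX : Measurable X) (hY : Measurable Y)
    (hXi : Integrable X P) (hYi : Integrable Y P)
    (hfsd : ∀ t : ℝ, P {ω | X ω ≤ t} ≤ P {ω | Y ω ≤ t})
    (η : ℝ)
    (hXpos : 0 < ∫ r in Set.Iic η, (P {ω | X ω ≤ r}).toReal)
    (hYpos : 0 < ∫ r in Set.Iic η, (P {ω | Y ω ≤ r}).toReal) :
    (∫ r in Set.Ioi η, (1 - (P {ω | Y ω ≤ r}).toReal))
        / (∫ r in Set.Iic η, (P {ω | Y ω ≤ r}).toReal)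
      ≤ (∫ r in Set.Ioi η, (1 - (P {ω | X ω ≤ r}).toReal))
        / (∫ r in Set.Iic η, (P {ω | X ω ≤ r}).toReal) := by
  have compl_eq : ∀ (Z : Ω → ℝ), Measurable Z → ∀ r : ℝ,
      1 - (P {ω | Z ω ≤ r}).toReal = (P {ω | r < Z ω}).toReal := by
    intro Z hZ r
    have hs : MeasurableSet {ω | Z ω ≤ r} := hZ measurableSet_Iic
    have hc : {ω | r < Z ω} = {ω | Z ω ≤ r}ᶜ := by ext ω; simp [not_le]
    rw [hc, measure_compl hs (measure_ne_top P _), measure_univ,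
      ENNReal.toReal_sub_of_le prob_le_one ENNReal.one_ne_top, ENNReal.toReal_one]
  simp_rw [compl_eq X hX, compl_eq Y hY]
  have hGXint := tail_integrableOn_aux P X hX hXi η
  have hGYint := tail_integrableOn_aux P Y hY hYi η
  have hGmono : ∫ r in Set.Ioi η, (P {ω | r < Y ω}).toReal
      ≤ ∫ r in Set.Ioi η, (P {ω | r < X ω}).toReal := by
    refine setIntegral_mono_on hGYint hGXint measurableSet_Ioi (fun r _ => ?_)
    have h1 : (P {ω | X ω ≤ r}).toReal ≤ (P {ω | Y ω ≤ r}).toReal :=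
      ENNReal.toReal_mono (measure_ne_top P _) (hfsd r)
    have h2 := compl_eq X hX r
    have h3 := compl_eq Y hY r
    linarith
  have hGXnn : 0 ≤ ∫ r in Set.Ioi η, (P {ω | r < X ω}).toReal :=
    setIntegral_nonneg measurableSet_Ioi fun r _ => ENNReal.toReal_nonneg
  have hLXint : IntegrableOn (fun r => (P {ω | X ω ≤ r}).toReal) (Set.Iic η) volume := by
    by_contra h
    rw [integral_undef h] at hXpos
    exact lt_irrefl 0 hXpos
  have hLYint : IntegrableOn (fun r => (P {ω | Y ω ≤ r}).toReal) (Set.Iic η) volume := by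
    by_contra h
    rw [integral_undef h] at hYpos
    exact lt_irrefl 0 hYpos
  have hLmono : ∫ r in Set.Iic η, (P {ω | X ω ≤ r}).toReal
      ≤ ∫ r in Set.Iic η, (P {ω | Y ω ≤ r}).toReal :=
    setIntegral_mono_on hLXint hLYint measurableSet_Iic
      (fun r _ => ENNReal.toReal_mono (measure_ne_top P _) (hfsd r))
  exact div_le_div₀ hGXnn hGmono hXpos hLmono
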